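/- If U is a stable ordered-union ultrafilter on FIN, then U is selective: whenever ⟨A_a⃗⟩ ∈ U for all a⃗ ∈ FIN^[<∞], there is ⟨B⟩ ∈ U such that B/a⃗ ⪯ A_a⃗ for every a⃗ ∈ FIN^[<∞] with a⃗ ⪯ B. -/

import Mathlib

namespace BlockPaper

variable {F : Type} [Field F]

/-- `X` is an infinite block sequence in `E = ⊕ₙ F`. -/
def IsBlock (X : ℕ → (ℕ →₀ F)) : Prop :=
  (∀ n, X n ≠ 0) ∧ ∀ n, ∀ i ∈ (X n).support, ∀ j ∈ (X (n + 1)).support, i < j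

/-- `⟨X⟩`: the linear span of the entries of `X`, with `0` removed. -/
def spanSet (X : ℕ → (ℕ →₀ F)) : Set (ℕ →₀ F) :=
  {v | v ≠ 0 ∧ v ∈ Submodule.span F (Set.range X)}

/-- `⟨X/n⟩`: the span (minus `0`) of the entries of `X` whose supports lie entirely above `n`. -/
def tailSpanSet (X : ℕ → (ℕ →₀ F)) (n : ℕ) : Set (ℕ →₀ F) :=
  {v | v ≠ 0 ∧ v ∈ Submodule.span F {x : ℕ →₀ F | (∃ k, X k = x) ∧ ∀ i ∈ x.support, n < i}}

/-- `X ⪯ Y`. -/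
def PLE (X Y : ℕ → (ℕ →₀ F)) : Prop := spanSet X ⊆ spanSet Y

/-- `X ⪯* Y`. -/
def PLEs (X Y : ℕ → (ℕ →₀ F)) : Prop := ∃ n, tailSpanSet X n ⊆ spanSet Y

/-- A block filter on `E`: a proper filter of subsets of `E ∖ {0}` containing all
finite-codimensional subspaces (minus `0`) and with a base of sets `⟨X⟩`, `X ∈ E^[∞]`. -/
structure BlockFilter (F : Type) [Field F] where
  sets : Set (Set (ℕ →₀ F))
  nonzero : ∀ S ∈ sets, ∀ v ∈ S, v ≠ 0
  proper : ∅ ∉ sets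
  upward : ∀ S ∈ sets, ∀ T : Set (ℕ →₀ F), (∀ v ∈ T, v ≠ 0) → S ⊆ T → T ∈ sets
  inter : ∀ S ∈ sets, ∀ T ∈ sets, S ∩ T ∈ sets
  codim : ∀ V : Submodule F (ℕ →₀ F), Module.Finite F ((ℕ →₀ F) ⧸ V) →
    {v : ℕ →₀ F | v ≠ 0 ∧ v ∈ V} ∈ sets
  blockBase : ∀ S ∈ sets, ∃ X : ℕ → (ℕ →₀ F),
    IsBlock X ∧ spanSet X ∈ sets ∧ spanSet X ⊆ S

/-- `D ⊆ E` is `𝓕`-dense. -/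
def FDense (𝓕 : BlockFilter F) (D : Set (ℕ →₀ F)) : Prop :=
  ∀ X : ℕ → (ℕ →₀ F), IsBlock X → spanSet X ∈ 𝓕.sets →
    ∃ V : Submodule F (ℕ →₀ F), ¬ Module.Finite F V ∧
      (V : Set (ℕ →₀ F)) \ {0} ⊆ spanSet X ∩ D

/-- `𝓕` is full: every `𝓕`-dense set belongs to `𝓕`. -/
def Full (𝓕 : BlockFilter F) : Prop :=
  ∀ D : Set (ℕ →₀ F), FDense 𝓕 D → D \ {0} ∈ 𝓕.sets

/-- `𝓕` is a `(p)`-filter. -/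
def PFilter (𝓕 : BlockFilter F) : Prop :=
  ∀ Xs : ℕ → ℕ → (ℕ →₀ F), (∀ n, IsBlock (Xs n) ∧ spanSet (Xs n) ∈ 𝓕.sets) →
    ∃ X : ℕ → (ℕ →₀ F), IsBlock X ∧ spanSet X ∈ 𝓕.sets ∧ ∀ n, PLEs X (Xs n)

/-- `𝓕` is a `(p⁺)`-filter: full and a `(p)`-filter. -/
def PPlus (𝓕 : BlockFilter F) : Prop := Full 𝓕 ∧ PFilter 𝓕

/-- A finite block sequence in `E`, as a list. -/
def IsBlockList (l : List (ℕ →₀ F)) : Prop :=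
  (∀ v ∈ l, v ≠ 0) ∧
    l.Chain' (fun u v : ℕ →₀ F => ∀ i ∈ u.support, ∀ j ∈ v.support, i < j)

/-- `𝓕` is a strong `(p)`-filter: any family `(X_x⃗)` indexed by finite block sequences,
with each `⟨X_x⃗⟩ ∈ 𝓕`, has a diagonalization `X` with `X/x⃗ ⪯ X_x⃗` for all finite initial
segments `x⃗` of `X`. -/
def StrongP (𝓕 : BlockFilter F) : Prop :=
  ∀ Xs : List (ℕ →₀ F) → ℕ → (ℕ →₀ F),
    (∀ l, IsBlockList l → IsBlock (Xs l) ∧ spanSet (Xs l) ∈ 𝓕.sets) →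
    ∃ X : ℕ → (ℕ →₀ F), IsBlock X ∧ spanSet X ∈ 𝓕.sets ∧
      ∀ k : ℕ, PLE (fun m => X (m + k)) (Xs (List.ofFn fun i : Fin k => X i))

/-- The outcome of a strategy (for II) against a sequence of opposing moves:
the `k`-th value is the strategy applied to the first `k+1` opposing moves. -/
def outcomeOf {α β : Type*} (st : List α → β) (Ys : ℕ → α) : ℕ → β :=
  fun k => st (List.ofFn fun i : Fin (k + 1) => Ys i)

/-- A legal move for player I in the Gowers game `G[X]`. -/
def LegalG (X Y : ℕ → (ℕ →₀ F)) : Prop := IsBlock Y ∧ PLE Y X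

/-- A legal move for player I in the restricted Gowers game `G_𝓕[X]`. -/
def LegalGF (𝓕 : BlockFilter F) (X Y : ℕ → (ℕ →₀ F)) : Prop :=
  IsBlock Y ∧ PLE Y X ∧ spanSet Y ∈ 𝓕.sets

/-- `α` is a strategy for player II in a Gowers-type game whose legal moves for I are
given by `legal`: against any sequence of legal I-moves, the outcome is a block
sequence whose `k`-th entry lies in the span of I's `k`-th move. -/
def IsStratII (legal : (ℕ → (ℕ →₀ F)) → Prop)
    (α : List (ℕ → (ℕ →₀ F)) → (ℕ →₀ F)) : Prop :=
  ∀ Ys : ℕ → ℕ → (ℕ →₀ F), (∀ k, legal (Ys k)) →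
    IsBlock (outcomeOf α Ys) ∧ ∀ k, outcomeOf α Ys k ∈ spanSet (Ys k)

/-- `𝓕` is strategic. -/
def Strategic (𝓕 : BlockFilter F) : Prop :=
  ∀ X : ℕ → (ℕ →₀ F), IsBlock X → spanSet X ∈ 𝓕.sets →
    ∀ α, IsStratII (LegalG X) α →
      ∃ Ys : ℕ → ℕ → (ℕ →₀ F), (∀ k, LegalG X (Ys k)) ∧
        spanSet (outcomeOf α Ys) ∈ 𝓕.sets

/-- `𝓕` is `+`-strategic. -/
def PlusStrategic (𝓕 : BlockFilter F) : Prop :=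
  ∀ X : ℕ → (ℕ →₀ F), IsBlock X → spanSet X ∈ 𝓕.sets →
    ∀ α, IsStratII (LegalGF 𝓕 X) α →
      ∃ Ys : ℕ → ℕ → (ℕ →₀ F), (∀ k, LegalGF 𝓕 X (Ys k)) ∧
        spanSet (outcomeOf α Ys) ∈ 𝓕.sets

/-- A legal finite position (list of II's moves so far) in a play where I follows `σ`. -/
def LegalPos (σ : List (ℕ →₀ F) → ℕ → (ℕ →₀ F)) (l : List (ℕ →₀ F)) : Prop :=
  IsBlockList l ∧ ∀ k, (h : k < l.length) → l.get ⟨k, h⟩ ∈ spanSet (σ (l.take k))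

/-- `σ` is a strategy for player I in the restricted Gowers game `G_𝓕[X]`. -/
def IsStratIGF (𝓕 : BlockFilter F) (X : ℕ → (ℕ →₀ F))
    (σ : List (ℕ →₀ F) → ℕ → (ℕ →₀ F)) : Prop :=
  ∀ l, LegalPos σ l → LegalGF 𝓕 X (σ l)

/-- `ys` is (the sequence of II's moves of) an infinite play against I's strategy `σ`
in a Gowers-type game; its outcome is `ys` itself. -/
def PlayAgainstI (σ : List (ℕ →₀ F) → ℕ → (ℕ →₀ F)) (ys : ℕ → (ℕ →₀ F)) : Prop :=
  IsBlock ys ∧ ∀ k, ys k ∈ spanSet (σ (List.ofFn fun i : Fin k => ys i))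

/-- `ys` is an infinite play against I's strategy `σ` in the asymptotic game `F[X]`. -/
def PlayAgainstIAsymp (X : ℕ → (ℕ →₀ F)) (σ : List (ℕ →₀ F) → ℕ)
    (ys : ℕ → (ℕ →₀ F)) : Prop :=
  IsBlock ys ∧ ∀ k, ys k ∈ spanSet X ∧
    ∀ i ∈ (ys k).support, σ (List.ofFn fun j : Fin k => ys j) < i

/-- `FIN`: nonempty finite subsets of `ℕ`. -/
abbrev FIN := {s : Finset ℕ // s.Nonempty}

/-- An infinite block sequence in `FIN`. -/
def IsBlockF (A : ℕ → Finset ℕ) : Prop :=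
  (∀ n, (A n).Nonempty) ∧ ∀ n, ∀ i ∈ A n, ∀ j ∈ A (n + 1), i < j

/-- `⟨A⟩`: unions of finitely many (at least one) entries of `A`. -/
def finUnions (A : ℕ → Finset ℕ) : Set (Finset ℕ) :=
  {b | ∃ G : Finset ℕ, G.Nonempty ∧ b = G.sup A}

/-- `⟨A/n⟩`: unions of finitely many entries of `A` contained in `(n, ∞)`. -/
def finUnionsAbove (A : ℕ → Finset ℕ) (n : ℕ) : Set (Finset ℕ) :=
  {b | ∃ G : Finset ℕ, G.Nonempty ∧ (∀ k ∈ G, ∀ i ∈ A k, n < i) ∧ b = G.sup A}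

/-- `A ⪯ B` in `FIN`. -/
def PLEF (A B : ℕ → Finset ℕ) : Prop := finUnions A ⊆ finUnions B

/-- `A ⪯* B` in `FIN`. -/
def PLEsF (A B : ℕ → Finset ℕ) : Prop := ∃ n, finUnionsAbove A n ⊆ finUnions B

/-- Lift a set of finite subsets of `ℕ` to a set of elements of `FIN`. -/
def liftFIN (S : Set (Finset ℕ)) : Set FIN := {a | (a : Finset ℕ) ∈ S}

/-- `U` is an ordered-union ultrafilter on `FIN`. -/
def OrderedUnion (U : Ultrafilter FIN) : Prop :=
  ∀ S ∈ U, ∃ A : ℕ → Finset ℕ, IsBlockF A ∧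
    liftFIN (finUnions A) ∈ U ∧ liftFIN (finUnions A) ⊆ S

/-- `U` is stable. -/
def Stable (U : Ultrafilter FIN) : Prop :=
  ∀ As : ℕ → ℕ → Finset ℕ, (∀ n, IsBlockF (As n) ∧ liftFIN (finUnions (As n)) ∈ U) →
    ∃ B : ℕ → Finset ℕ, IsBlockF B ∧ liftFIN (finUnions B) ∈ U ∧ ∀ n, PLEsF B (As n)

/-- `supp(X)`: the sequence of supports of the entries of `X`. -/
def suppSeq (X : ℕ → (ℕ →₀ F)) : ℕ → Finset ℕ := fun k => (X k).support

/-- `supp(𝓕)`: the collection of `A ⊆ FIN` containing `{supp v : v ∈ S}` for some `S ∈ 𝓕`. -/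
def suppFilter (𝓕 : BlockFilter F) : Set (Set FIN) :=
  {A | ∃ S ∈ 𝓕.sets, ∀ a : FIN, (∃ v ∈ S, (a : Finset ℕ) = v.support) → a ∈ A}

/-- A finite block sequence in `FIN`, as a list. -/
def IsBlockListF (l : List (Finset ℕ)) : Prop :=
  (∀ a ∈ l, a.Nonempty) ∧
    l.Chain' (fun a b : Finset ℕ => ∀ i ∈ a, ∀ j ∈ b, i < j)

end BlockPaper
open BlockPaper

/-- `⟨a⃗⟩` for a finite block sequence `a⃗` in `FIN`: unions of finitely many (at least
one) entries of `a⃗`. -/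
def finUnionsL (l : List (Finset ℕ)) : Set (Finset ℕ) :=
  {b | ∃ G : Finset ℕ, G.Nonempty ∧ (∀ k ∈ G, k < l.length) ∧
    b = G.sup (fun k => l.getD k ∅)}

/-- `⟨B/a⃗⟩`: unions of finitely many entries of `B` lying entirely above all entries
of `a⃗`. -/
def finUnionsAboveL (B : ℕ → Finset ℕ) (l : List (Finset ℕ)) : Set (Finset ℕ) :=
  {b | ∃ G : Finset ℕ, G.Nonempty ∧ (∀ k ∈ G, ∀ a ∈ l, ∀ i ∈ a, ∀ j ∈ B k, i < j) ∧
    b = G.sup B}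


section Stmt7Aux

open BlockPaper

/-- Elements of `s` that start a new `d`-cluster: all earlier elements `b` of `s`
have `d b < a`. -/
def cStarts (d : ℕ → ℕ) (s : Finset ℕ) : Finset ℕ :=
  s.filter fun a => ∀ b ∈ s, b < a → d b < a

lemma mem_cStarts {d : ℕ → ℕ} {s : Finset ℕ} {a : ℕ} :
    a ∈ cStarts d s ↔ a ∈ s ∧ ∀ b ∈ s, b < a → d b < a :=
  Finset.mem_filter

lemma mem_of_mem_cStarts {d : ℕ → ℕ} {s : Finset ℕ} {a : ℕ} (h : a ∈ cStarts d s) : a ∈ s :=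
  (mem_cStarts.1 h).1

lemma min'_mem_cStarts (d : ℕ → ℕ) {x : Finset ℕ} (hx : x.Nonempty) :
    x.min' hx ∈ cStarts d x :=
  mem_cStarts.2 ⟨x.min'_mem hx, fun b hb hbl => absurd (x.min'_le b hb) (not_le.2 hbl)⟩

lemma cStarts_union {d : ℕ → ℕ} (hd : Monotone d) {u x : Finset ℕ} (hu : u.Nonempty)
    (hlt : ∀ i ∈ u, ∀ j ∈ x, i < j) :
    cStarts d (u ∪ x) = cStarts d u ∪ (cStarts d x).filter (fun a => d (u.max' hu) < a) := by
  ext a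
  simp only [mem_cStarts, Finset.mem_filter, Finset.mem_union]
  constructor
  · rintro ⟨(ha | ha), h2⟩
    · exact Or.inl ⟨ha, fun b hb hba => h2 b (Or.inl hb) hba⟩
    · refine Or.inr ⟨⟨ha, fun b hb hba => h2 b (Or.inr hb) hba⟩, ?_⟩
      exact h2 _ (Or.inl (u.max'_mem hu)) (hlt _ (u.max'_mem hu) _ ha)
  · rintro (⟨ha, h2⟩ | ⟨⟨ha, h2⟩, h3⟩)
    · refine ⟨Or.inl ha, ?_⟩
      rintro b (hb | hb) hba
      · exact h2 b hb hba
      · exact absurd (hlt a ha b hb) (lt_asymm hba)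
    · refine ⟨Or.inr ha, ?_⟩
      rintro b (hb | hb) hba
      · exact lt_of_le_of_lt (hd (u.le_max' b hb)) h3
      · exact h2 b hb hba

lemma card_cStarts_union_sep {d : ℕ → ℕ} (hd : Monotone d) {u x : Finset ℕ}
    (hu : u.Nonempty) (hlt : ∀ i ∈ u, ∀ j ∈ x, i < j)
    (hgap : ∀ j ∈ x, d (u.max' hu) < j) :
    (cStarts d (u ∪ x)).card = (cStarts d u).card + (cStarts d x).card := by
  rw [cStarts_union hd hu hlt,
    Finset.filter_true_of_mem (fun a ha => hgap a (mem_of_mem_cStarts ha)),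
    Finset.card_union_of_disjoint]
  exact Finset.disjoint_left.2 fun a hau hax =>
    lt_irrefl a (hlt a (mem_of_mem_cStarts hau) a (mem_of_mem_cStarts hax))

lemma card_cStarts_union_close {d : ℕ → ℕ} (hd : Monotone d) {u x : Finset ℕ}
    (hu : u.Nonempty) (hx : x.Nonempty) (hlt : ∀ i ∈ u, ∀ j ∈ x, i < j)
    (hclose : ∃ j ∈ x, j ≤ d (u.max' hu)) :
    (cStarts d (u ∪ x)).card + 1 = (cStarts d u).card + (cStarts d x).card := by
  have hdisj : Disjoint (cStarts d u) ((cStarts d x).filter (fun a => d (u.max' hu) < a)) :=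
    Finset.disjoint_left.2 fun a hau hax =>
      lt_irrefl a (hlt a (mem_of_mem_cStarts hau) a
        (mem_of_mem_cStarts (Finset.mem_filter.1 hax).1))
  rw [cStarts_union hd hu hlt, Finset.card_union_of_disjoint hdisj]
  have hfil : (cStarts d x).filter (fun a => d (u.max' hu) < a)
      = (cStarts d x).erase (x.min' hx) := by
    ext a
    simp only [Finset.mem_filter, Finset.mem_erase]
    constructor
    · rintro ⟨ha, hda⟩
      refine ⟨?_, ha⟩
      rintro rfl
      obtain ⟨j, hj, hjle⟩ := hclose
      have := x.min'_le j hj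
      omega
    · rintro ⟨hne, ha⟩
      refine ⟨ha, ?_⟩
      have hmlt : x.min' hx < a :=
        lt_of_le_of_ne (x.min'_le a (mem_of_mem_cStarts ha)) (Ne.symm hne)
      have hda := (mem_cStarts.1 ha).2 _ (x.min'_mem hx) hmlt
      have hMm : u.max' hu < x.min' hx := hlt _ (u.max'_mem hu) _ (x.min'_mem hx)
      exact lt_of_le_of_lt (hd (le_of_lt hMm)) hda
  rw [hfil, Finset.card_erase_of_mem (min'_mem_cStarts d hx)]
  have hpos : 0 < (cStarts d x).card := Finset.card_pos.2 ⟨_, min'_mem_cStarts d hx⟩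
  omega

lemma gap_of_even {d : ℕ → ℕ} (hd : Monotone d) {u x : Finset ℕ} (hu : u.Nonempty)
    (hx : x.Nonempty) (hlt : ∀ i ∈ u, ∀ j ∈ x, i < j)
    (h1 : Even (cStarts d u).card) (h2 : Even (cStarts d x).card)
    (h3 : Even (cStarts d (u ∪ x)).card) : ∀ j ∈ x, d (u.max' hu) < j := by
  by_contra hcon
  push_neg at hcon
  have hclose := card_cStarts_union_close hd hu hx hlt hcon
  obtain ⟨p, hp⟩ := h1
  obtain ⟨q, hq⟩ := h2
  obtain ⟨r, hr⟩ := h3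
  omega

lemma blockF_le {B : ℕ → Finset ℕ} (hB : IsBlockF B) : ∀ n, ∀ j ∈ B n, n ≤ j := by
  intro n
  induction n with
  | zero => exact fun j _ => Nat.zero_le j
  | succ n ih =>
    intro j hj
    obtain ⟨t, ht⟩ := hB.1 n
    exact Nat.succ_le_of_lt (lt_of_le_of_lt (ih t ht) (hB.2 n t ht j hj))

lemma blockF_lt {B : ℕ → Finset ℕ} (hB : IsBlockF B) {m n : ℕ} (h : m < n) :
    ∀ i ∈ B m, ∀ j ∈ B n, i < j := by
  induction n with
  | zero => omega
  | succ n ih =>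
    intro i hi j hj
    rcases Nat.lt_succ_iff_lt_or_eq.1 h with h' | h'
    · obtain ⟨t, ht⟩ := hB.1 n
      exact lt_trans (ih h' i hi t ht) (hB.2 n t ht j hj)
    · subst h'
      exact hB.2 m i hi j hj

lemma mem_finUnions_nonempty {B : ℕ → Finset ℕ} (hB : IsBlockF B) {b : Finset ℕ}
    (hb : b ∈ finUnions B) : b.Nonempty := by
  obtain ⟨G, hG, rfl⟩ := hb
  obtain ⟨k, hk⟩ := hG
  obtain ⟨j, hj⟩ := hB.1 k
  exact ⟨j, Finset.mem_sup.2 ⟨k, hk, hj⟩⟩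

lemma union_mem_finUnions {B : ℕ → Finset ℕ} {a b : Finset ℕ}
    (ha : a ∈ finUnions B) (hb : b ∈ finUnions B) : a ∪ b ∈ finUnions B := by
  obtain ⟨G1, h1, rfl⟩ := ha
  obtain ⟨G2, h2, rfl⟩ := hb
  exact ⟨G1 ∪ G2, h1.mono Finset.subset_union_left, (Finset.sup_union).symm⟩

lemma entry_mem_finUnions (B : ℕ → Finset ℕ) (k : ℕ) : B k ∈ finUnions B :=
  ⟨{k}, Finset.singleton_nonempty k, (Finset.sup_singleton).symm⟩

lemma finite_bounded_lists {α : Type*} (P : Finset α) :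
    ∀ n : ℕ, {l : List α | l.length ≤ n ∧ ∀ a ∈ l, a ∈ P}.Finite := by
  intro n
  induction n with
  | zero =>
    apply Set.Finite.subset (Set.finite_singleton [])
    rintro l ⟨hl, -⟩
    simp [List.length_eq_zero_iff.1 (Nat.le_zero.1 hl)]
  | succ n ih =>
    apply Set.Finite.subset (Set.Finite.insert []
      ((P.finite_toSet.prod ih).image (fun p => p.1 :: p.2)))
    rintro l ⟨hl, hP⟩
    cases l with
    | nil => exact Set.mem_insert _ _
    | cons a t =>
      refine Set.mem_insert_of_mem _ ⟨(a, t), ⟨hP a (List.mem_cons_self), ?_, ?_⟩, rfl⟩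
      · simpa using hl
      · exact fun b hb => hP b (List.mem_cons_of_mem _ hb)

lemma blockListF_length_le {l : List (Finset ℕ)} (hl : IsBlockListF l) {m : ℕ}
    (hb : ∀ a ∈ l, ∀ i ∈ a, i ≤ m) : l.length ≤ m + 1 := by
  by_contra hcon
  push_neg at hcon
  have hchain := List.isChain_iff_getElem.1 hl.2
  have key : ∀ k, ∀ (hk : k < l.length), ∀ j ∈ l.get ⟨k, hk⟩, k ≤ j := by
    intro k
    induction k with
    | zero => exact fun hk j _ => Nat.zero_le j
    | succ k ih =>
      intro hk j hj
      have hk' : k < l.length := by omega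
      obtain ⟨i, hi⟩ := hl.1 _ (l.get_mem ⟨k, hk'⟩)
      have h1 : k ≤ i := ih hk' i hi
      have h2 : i < j := hchain k (by omega) i hi j hj
      omega
  obtain ⟨j, hj⟩ := hl.1 _ (l.get_mem ⟨m+1, hcon⟩)
  have h1 := key (m + 1) hcon j hj
  have h2 := hb _ (l.get_mem ⟨m+1, hcon⟩) j hj
  omega

end Stmt7Aux

/-- A stable ordered-union ultrafilter on `FIN` is selective. -/

theorem stmt7 (U : Ultrafilter FIN) (hOU : OrderedUnion U) (hSt : Stable U)
    (As : List (Finset ℕ) → ℕ → Finset ℕ)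
    (hAs : ∀ l, IsBlockListF l → IsBlockF (As l) ∧ liftFIN (finUnions (As l)) ∈ U) :
    ∃ B : ℕ → Finset ℕ, IsBlockF B ∧ liftFIN (finUnions B) ∈ U ∧
      ∀ l, IsBlockListF l → finUnionsL l ⊆ finUnions B →
        finUnionsAboveL B l ⊆ finUnions (As l) := by
  classical
  -- the (finite) collections of finite block sequences with entries bounded by `m`
  set L : ℕ → Set (List (Finset ℕ)) :=
    fun m => {l | IsBlockListF l ∧ ∀ a ∈ l, ∀ i ∈ a, i ≤ m} with hLdef
  have hLfin : ∀ m, (L m).Finite := by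
    intro m
    apply Set.Finite.subset (finite_bounded_lists ((Finset.range (m + 1)).powerset) (m + 1))
    rintro l ⟨h1, h2⟩
    refine ⟨blockListF_length_le h1 h2, fun a ha => Finset.mem_powerset.2 fun i hi =>
      Finset.mem_range.2 (Nat.lt_succ_of_le (h2 a ha i hi))⟩
  have hSm : ∀ m, (⋂ l ∈ L m, liftFIN (finUnions (As l))) ∈ U := by
    intro m
    exact (Filter.biInter_mem (hLfin m)).2 fun l hl => (hAs l hl.1).2
  have hA : ∀ m, ∃ A : ℕ → Finset ℕ, IsBlockF A ∧ liftFIN (finUnions A) ∈ U ∧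
      liftFIN (finUnions A) ⊆ ⋂ l ∈ L m, liftFIN (finUnions (As l)) :=
    fun m => hOU _ (hSm m)
  choose A hA1 hA2 hA3 using hA
  obtain ⟨C, hC1, hC2, hC3⟩ := hSt A fun n => ⟨hA1 n, hA2 n⟩
  choose nf hnf using hC3
  set d : ℕ → ℕ := fun m => m + (Finset.range (m + 1)).sup nf with hddef
  have hdmono : Monotone d := by
    intro a b hab
    refine Nat.add_le_add hab (Finset.sup_mono ?_)
    intro k hk
    simp only [Finset.mem_range] at *
    omega
  have hdge : ∀ m, nf m ≤ d m :=
    fun m => le_trans (Finset.le_sup (Finset.mem_range.2 (Nat.lt_succ_self m)))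
      (Nat.le_add_left _ _)
  -- the parity set is in U
  set T : Set FIN := {a | Even (cStarts d (a : Finset ℕ)).card} with hTdef
  have hTU : T ∈ U := by
    by_contra hTc
    have hTc' : Tᶜ ∈ U := (Ultrafilter.compl_mem_iff_notMem).2 hTc
    obtain ⟨B', hB'1, hB'2, hB'3⟩ := hOU _ hTc'
    have hmem : ∀ b ∈ finUnions B', ¬ Even (cStarts d b).card := by
      intro b hb
      have hbne : b.Nonempty := mem_finUnions_nonempty hB'1 hb
      exact hB'3 (show (⟨b, hbne⟩ : FIN) ∈ liftFIN (finUnions B') from hb)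
    have hune : (B' 0).Nonempty := hB'1.1 0
    set k := d ((B' 0).max' hune) + 1 with hkdef
    have hlt : ∀ i ∈ B' 0, ∀ j ∈ B' k, i < j := blockF_lt hB'1 (Nat.succ_pos _)
    have hgap : ∀ j ∈ B' k, d ((B' 0).max' hune) < j := fun j hj =>
      Nat.lt_of_lt_of_le (Nat.lt_succ_self _) (blockF_le hB'1 k j hj)
    have hsum := card_cStarts_union_sep hdmono hune hlt hgap
    have hU := hmem _ (union_mem_finUnions (entry_mem_finUnions B' 0) (entry_mem_finUnions B' k))
    rw [hsum] at hU
    exact hU (Nat.even_add.2 (iff_of_false (hmem _ (entry_mem_finUnions B' 0))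
      (hmem _ (entry_mem_finUnions B' k))))
  -- the final block sequence
  have hSfin : T ∩ (liftFIN (finUnions C) ∩ liftFIN (finUnions (A 0))) ∈ U :=
    Filter.inter_mem hTU (Filter.inter_mem hC2 (hA2 0))
  obtain ⟨B, hB1, hB2, hB3⟩ := hOU _ hSfin
  refine ⟨B, hB1, hB2, ?_⟩
  have hmemS : ∀ c ∈ finUnions B,
      Even (cStarts d c).card ∧ c ∈ finUnions C ∧ c ∈ finUnions (A 0) := by
    intro c hc
    have hcne : c.Nonempty := mem_finUnions_nonempty hB1 hc
    have h := hB3 (show (⟨c, hcne⟩ : FIN) ∈ liftFIN (finUnions B) from hc)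
    exact ⟨h.1, h.2.1, h.2.2⟩
  intro l hl hsub b hb
  obtain ⟨G, hG, hGabove, rfl⟩ := hb
  have hxB : G.sup B ∈ finUnions B := ⟨G, hG, rfl⟩
  have hxne : (G.sup B).Nonempty := mem_finUnions_nonempty hB1 hxB
  rcases eq_or_ne l [] with rfl | hlne
  · -- empty list: use A 0
    have h0 : ([] : List (Finset ℕ)) ∈ L 0 :=
      ⟨⟨by simp, List.isChain_nil⟩, by simp⟩
    have hx0 : G.sup B ∈ finUnions (A 0) := (hmemS _ hxB).2.2
    have hmem0 : (⟨G.sup B, hxne⟩ : FIN) ∈ ⋂ l ∈ L 0, liftFIN (finUnions (As l)) :=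
      hA3 0 hx0
    exact Set.mem_iInter₂.1 hmem0 [] h0
  · set u : Finset ℕ := (Finset.range l.length).sup (fun k => l.getD k ∅) with hudef
    have hlpos : 0 < l.length := List.length_pos_iff.2 hlne
    have huL : u ∈ finUnionsL l :=
      ⟨Finset.range l.length, Finset.nonempty_range_iff.2 (by omega),
        fun k hk => Finset.mem_range.1 hk, rfl⟩
    have huB : u ∈ finUnions B := hsub huL
    have hune : u.Nonempty := mem_finUnions_nonempty hB1 huB
    have hsubu : ∀ a ∈ l, a ⊆ u := by
      intro a ha
      obtain ⟨k, hk, rfl⟩ := List.mem_iff_getElem.1 ha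
      have hgd : l.getD k ∅ = l[k] := List.getD_eq_getElem l ∅ hk
      have hle : l.getD k ∅ ≤ (Finset.range l.length).sup (fun k => l.getD k ∅) :=
        Finset.le_sup (f := fun k => l.getD k ∅) (Finset.mem_range.2 hk)
      rw [hgd] at hle
      exact hle
    have hlt : ∀ i ∈ u, ∀ j ∈ G.sup B, i < j := by
      intro i hi j hj
      obtain ⟨k', hk', hik⟩ := Finset.mem_sup.1 hi
      obtain ⟨k, hk, hjk⟩ := Finset.mem_sup.1 hj
      have hkl : k' < l.length := Finset.mem_range.1 hk'
      have halmem : l.getD k' ∅ ∈ l := by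
        rw [List.getD_eq_getElem l ∅ hkl]
        exact List.getElem_mem hkl
      exact hGabove k hk _ halmem i hik j hjk
    have hPu := (hmemS u huB).1
    have hPx := (hmemS _ hxB).1
    have hPux := (hmemS _ (union_mem_finUnions huB hxB)).1
    have hgap : ∀ j ∈ G.sup B, d (u.max' hune) < j :=
      gap_of_even hdmono hune hxne hlt hPu hPx hPux
    set M := u.max' hune with hMdef
    have hxC : G.sup B ∈ finUnions C := (hmemS _ hxB).2.1
    obtain ⟨Gc, hGc, hxC'⟩ := hxC
    have hxAM : G.sup B ∈ finUnions (A M) := by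
      apply hnf M
      refine ⟨Gc, hGc, ?_, hxC'⟩
      intro k hk i hik
      have hiX : i ∈ G.sup B := by
        rw [hxC']
        exact Finset.mem_sup.2 ⟨k, hk, hik⟩
      exact lt_of_le_of_lt (hdge M) (hgap i hiX)
    have hlL : l ∈ L M := ⟨hl, fun a ha i hi => u.le_max' i (hsubu a ha hi)⟩
    have hmemM : (⟨G.sup B, hxne⟩ : FIN) ∈ ⋂ l ∈ L M, liftFIN (finUnions (As l)) :=
      hA3 M hxAM
    exact Set.mem_iInter₂.1 hmemM l hlL
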